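/- Let S be a stopping time with E[S] < ∞ with respect to a filtration (F_i), and let (X_i) be a submartingale such that there is c ∈ ℝ with E[|X_i − X_{i+1}| | F_i]·1{i < S} ≤ c for all i ∈ ℕ. Then E[X_S | F_0] ≥ X_0. -/

import Mathlib

open MeasureTheory Filter Set
open scoped ENNReal NNReal Topology

/-- Optional stopping for submartingales with uniformly bounded expected one-step
differences before the stopping time: `E[X_S | F_0] ≥ X_0`. -/
theorem optional_stopping_submartingale
    {Ω : Type*} {m0 : MeasurableSpace Ω} (μ : Measure Ω) [IsProbabilityMeasure μ]
    (ℱ : Filtration ℕ m0) (X : ℕ → Ω → ℝ) (S : Ω → ℕ)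
    (hS : IsStoppingTime ℱ (fun ω => (S ω : WithTop ℕ)))
    (hSint : Integrable (fun ω => (S ω : ℝ)) μ)
    (hsub : Submartingale X ℱ μ)
    (c : ℝ)
    (hbdd : ∀ i : ℕ, ∀ᵐ ω ∂μ,
      (μ[fun ω' => |X i ω' - X (i + 1) ω'| | ℱ i]) ω *
          Set.indicator {ω' | i < S ω'} (fun _ => (1 : ℝ)) ω ≤ c) :
    X 0 ≤ᵐ[μ] (μ[fun ω => X (S ω) ω | ℱ 0]) := by
  classical
  set d : ℕ → Ω → ℝ := fun i ω => |X i ω - X (i + 1) ω| with hd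
  set A : ℕ → Set Ω := fun i => {ω | i < S ω} with hA
  have hAmeasF : ∀ i, MeasurableSet[ℱ i] (A i) := by
    intro i
    have h1 : MeasurableSet[ℱ i] ({ω | (S ω : WithTop ℕ) ≤ i}ᶜ) := (hS i).compl
    have h2 : {ω | (S ω : WithTop ℕ) ≤ i}ᶜ = A i := by ext ω; simp [hA, not_le]
    rwa [h2] at h1
  have hAmeas : ∀ i, MeasurableSet (A i) := fun i => ℱ.le i _ (hAmeasF i)
  have hdint : ∀ i, Integrable (d i) μ :=
    fun i => ((hsub.integrable i).sub (hsub.integrable (i + 1))).abs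
  -- the dominating function
  set G : Ω → ℝ := fun ω => ∑ i ∈ Finset.range (S ω), d i ω with hG
  have hGnonneg : ∀ ω, 0 ≤ G ω :=
    fun ω => Finset.sum_nonneg fun i _ => abs_nonneg _
  -- measurability of G via the stopped value of the adapted process V
  set V : ℕ → Ω → ℝ := fun n ω => ∑ i ∈ Finset.range n, d i ω with hV
  have hVadapted : StronglyAdapted ℱ V := by
    intro n
    refine Finset.stronglyMeasurable_fun_sum _ fun i hi => ?_
    have hin : i + 1 ≤ n := Finset.mem_range.1 hi
    exact (((hsub.stronglyAdapted i).mono (ℱ.mono (le_of_lt hin))).sub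
      ((hsub.stronglyAdapted (i + 1)).mono (ℱ.mono hin))).norm
  have hGmeas : AEStronglyMeasurable G μ := by
    have h := measurable_stoppedValue (f := ℱ) (u := V)
      hVadapted.progMeasurable_of_discrete hS
    exact (h.mono hS.measurableSpace_le le_rfl).aestronglyMeasurable
  -- key set-integral bound for each increment
  have key : ∀ i, ∫ ω in A i, d i ω ∂μ ≤ c * (μ (A i)).toReal := by
    intro i
    have h1 : ∫ ω in A i, d i ω ∂μ = ∫ ω in A i, (μ[d i|ℱ i]) ω ∂μ :=
      (setIntegral_condExp (ℱ.le i) (hdint i) (hAmeasF i)).symm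
    have h3 : (A i).indicator (μ[d i|ℱ i]) ≤ᵐ[μ] (A i).indicator (fun _ => c) := by
      filter_upwards [hbdd i] with ω hω
      by_cases hmem : ω ∈ A i
      · rw [Set.indicator_of_mem hmem, Set.indicator_of_mem hmem] at *
        simpa [Set.indicator_of_mem hmem] using hω
      · simp [Set.indicator_of_notMem hmem]
    calc ∫ ω in A i, d i ω ∂μ = ∫ ω, (A i).indicator (μ[d i|ℱ i]) ω ∂μ := by
          rw [h1, integral_indicator (hAmeas i)]
      _ ≤ ∫ ω, (A i).indicator (fun _ => c) ω ∂μ :=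
          integral_mono_ae (integrable_condExp.indicator (hAmeas i))
            ((integrable_const c).indicator (hAmeas i)) h3
      _ = c * (μ (A i)).toReal := by
          rw [integral_indicator (hAmeas i), setIntegral_const, smul_eq_mul, mul_comm, measureReal_def]
  -- total mass bound: ∑ μ (A i) = ∫⁻ S < ∞
  have hlintS : ∫⁻ ω, (S ω : ℝ≥0∞) ∂μ < ⊤ := by
    have h := hSint.2
    rw [HasFiniteIntegral] at h
    convert h using 2 with ω
    simp
  have hsumA : ∑' i, μ (A i) = ∫⁻ ω, (S ω : ℝ≥0∞) ∂μ := by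
    have h1 : ∀ i, μ (A i) = ∫⁻ ω, (A i).indicator (fun _ => (1 : ℝ≥0∞)) ω ∂μ := by
      intro i
      rw [lintegral_indicator (hAmeas i) _]
      simp
    simp_rw [h1]
    rw [← lintegral_tsum fun i => (measurable_const.indicator (hAmeas i)).aemeasurable]
    refine lintegral_congr fun ω => ?_
    rw [tsum_eq_sum (s := Finset.range (S ω))
      (fun i hi => Set.indicator_of_notMem (by simpa [hA] using Finset.mem_range.not.1 hi) _)]
    rw [Finset.sum_congr rfl fun i hi =>
      Set.indicator_of_mem (by simpa [hA] using Finset.mem_range.1 hi) _]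
    simp
  -- integrability of G
  have hGint : Integrable G μ := by
    refine ⟨hGmeas, ?_⟩
    rw [hasFiniteIntegral_iff_ofReal (ae_of_all _ hGnonneg)]
    have heq : ∀ ω, ENNReal.ofReal (G ω) =
        ∑' i, (A i).indicator (fun ω' => ENNReal.ofReal (d i ω')) ω := by
      intro ω
      have hsupp : ∀ i ∉ Finset.range (S ω),
          (A i).indicator (fun ω' => ENNReal.ofReal (d i ω')) ω = 0 := by
        intro i hi
        have hmem : ω ∉ A i := fun h => hi (Finset.mem_range.2 h)
        simp [Set.indicator_of_notMem hmem]
      rw [tsum_eq_sum hsupp, hG]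
      simp only
      rw [ENNReal.ofReal_sum_of_nonneg fun i _ => abs_nonneg _]
      refine Finset.sum_congr rfl fun i hi => ?_
      have hmem : ω ∈ A i := Finset.mem_range.1 hi
      rw [Set.indicator_of_mem hmem]
    have hbound : ∀ i, ∫⁻ ω, (A i).indicator (fun ω' => ENNReal.ofReal (d i ω')) ω ∂μ ≤
        ENNReal.ofReal c * μ (A i) := by
      intro i
      rw [lintegral_indicator (hAmeas i) _]
      rw [← ofReal_integral_eq_lintegral_ofReal ((hdint i).integrableOn)
        (ae_of_all _ fun ω => abs_nonneg _)]
      calc ENNReal.ofReal (∫ ω in A i, d i ω ∂μ)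
          ≤ ENNReal.ofReal (c * (μ (A i)).toReal) := ENNReal.ofReal_le_ofReal (key i)
        _ = ENNReal.ofReal c * ENNReal.ofReal (μ (A i)).toReal :=
            ENNReal.ofReal_mul' ENNReal.toReal_nonneg
        _ = ENNReal.ofReal c * μ (A i) := by rw [ENNReal.ofReal_toReal (measure_ne_top μ _)]
    calc ∫⁻ ω, ENNReal.ofReal (G ω) ∂μ
        = ∫⁻ ω, ∑' i, (A i).indicator (fun ω' => ENNReal.ofReal (d i ω')) ω ∂μ :=
          lintegral_congr heq
      _ = ∑' i, ∫⁻ ω, (A i).indicator (fun ω' => ENNReal.ofReal (d i ω')) ω ∂μ :=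
          lintegral_tsum fun i =>
            ((hdint i).aestronglyMeasurable.aemeasurable.ennreal_ofReal).indicator (hAmeas i)
      _ ≤ ∑' i, ENNReal.ofReal c * μ (A i) := ENNReal.tsum_le_tsum hbound
      _ = ENNReal.ofReal c * ∑' i, μ (A i) := ENNReal.tsum_mul_left
      _ < ⊤ := by
          rw [hsumA]
          exact ENNReal.mul_lt_top ENNReal.ofReal_lt_top hlintS
  -- telescoping bound
  have htel : ∀ (k : ℕ) (ω : Ω), k ≤ S ω → |X k ω| ≤ |X 0 ω| + G ω := by
    intro k ω hk
    have h1 : X k ω - X 0 ω = ∑ i ∈ Finset.range k, (X (i + 1) ω - X i ω) :=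
      (Finset.sum_range_sub (fun i => X i ω) k).symm
    have h2 : |X k ω| ≤ |X 0 ω| + |X k ω - X 0 ω| := by
      have := abs_add_le (X 0 ω) (X k ω - X 0 ω)
      simpa using this
    have h3 : |X k ω - X 0 ω| ≤ ∑ i ∈ Finset.range k, d i ω := by
      rw [h1]
      refine (Finset.abs_sum_le_sum_abs _ _).trans (le_of_eq ?_)
      exact Finset.sum_congr rfl fun i _ => abs_sub_comm _ _
    have h4 : ∑ i ∈ Finset.range k, d i ω ≤ G ω :=
      Finset.sum_le_sum_of_subset_of_nonneg
        (Finset.range_subset_range.2 hk) (fun i _ _ => abs_nonneg _)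
    linarith
  -- the stopped value is integrable
  have hXSmeas : AEStronglyMeasurable (fun ω => X (S ω) ω) μ := by
    have h := measurable_stoppedValue (f := ℱ) (u := X)
      hsub.stronglyAdapted.progMeasurable_of_discrete hS
    exact (h.mono hS.measurableSpace_le le_rfl).aestronglyMeasurable
  have hXSint : Integrable (fun ω => X (S ω) ω) μ := by
    refine Integrable.mono' ((hsub.integrable 0).abs.add hGint) hXSmeas ?_
    exact ae_of_all _ fun ω => by
      simpa [Real.norm_eq_abs] using htel (S ω) ω le_rfl
  -- the stopped process
  have hY := hsub.stoppedProcess hS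
  have hYint : ∀ n, Integrable (stoppedProcess X (fun ω => (S ω : WithTop ℕ)) n) μ := hY.2.2
  have hle : ∀ n, X 0 ≤ᵐ[μ] μ[stoppedProcess X (fun ω => (S ω : WithTop ℕ)) n|ℱ 0] := by
    intro n
    have h := hY.2.1 0 n (Nat.zero_le n)
    have h0 : stoppedProcess X (fun ω => (S ω : WithTop ℕ)) 0 = X 0 := by
      funext ω
      show X (min 0 (S ω)) ω = X 0 ω
      simp
    rwa [h0] at h
  -- final step via the trimmed measure
  have hm0 : ℱ 0 ≤ m0 := ℱ.le 0
  refine ae_le_of_ae_le_trim (hm := hm0) ?_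
  refine ae_le_of_forall_setIntegral_le
    ((hsub.integrable 0).trim hm0 (hsub.stronglyAdapted 0))
    (integrable_condExp.trim hm0 stronglyMeasurable_condExp) ?_
  intro s hs _
  rw [← setIntegral_trim hm0 (hsub.stronglyAdapted 0) hs,
    ← setIntegral_trim hm0 stronglyMeasurable_condExp hs,
    setIntegral_condExp hm0 hXSint hs]
  have hsm : MeasurableSet s := hm0 _ hs
  have htend : Tendsto (fun n => ∫ ω in s, stoppedProcess X (fun ω => (S ω : WithTop ℕ)) n ω ∂μ) atTop
      (𝓝 (∫ ω in s, X (S ω) ω ∂μ)) := by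
    refine tendsto_integral_of_dominated_convergence (fun ω => |X 0 ω| + G ω)
      (fun n => (hYint n).1.restrict)
      (((hsub.integrable 0).abs.add hGint).restrict) ?_ ?_
    · intro n
      refine ae_of_all _ fun ω => ?_
      simpa [Real.norm_eq_abs,
        show stoppedProcess X (fun ω => (S ω : WithTop ℕ)) n ω = X (min n (S ω)) ω from rfl] using
        htel (min n (S ω)) ω (min_le_right _ _)
    · refine ae_of_all _ fun ω => ?_
      refine tendsto_atTop_of_eventually_const (i₀ := S ω) fun n hn => ?_
      show X (min n (S ω)) ω = X (S ω) ω
      simp [min_eq_right hn]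
  refine ge_of_tendsto' htend fun n => ?_
  calc ∫ ω in s, X 0 ω ∂μ ≤ ∫ ω in s, (μ[stoppedProcess X (fun ω => (S ω : WithTop ℕ)) n|ℱ 0]) ω ∂μ :=
        integral_mono_ae ((hsub.integrable 0).restrict)
          (integrable_condExp.restrict) (ae_restrict_of_ae (hle n))
    _ = ∫ ω in s, stoppedProcess X (fun ω => (S ω : WithTop ℕ)) n ω ∂μ := setIntegral_condExp hm0 (hYint n) hs
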